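/- Let j, k, k' be distinct elements of S and let x = (u, k, j, v, k', j) and x' = (u', k', j, v', k, j) be finite strings over S (u, v, u', v' possibly empty) such that x ∼ x'. Then {u, k} ∩ {j, v, k'} ≠ ∅ or {u', k'} ∩ {j, v', k} ≠ ∅ (or both), where {u, k} denotes the set of elements appearing in the string (u, k), and similarly for the other sets. -/

import Mathlib

/-!
STATEMENT 7 (Lemma 2): if `j, k, k'` are distinct and
`(u,k,j,v,k',j) ∼ (u',k',j,v',k,j)`, then `{u,k} ∩ {j,v,k'} ≠ ∅` or
`{u',k'} ∩ {j,v',k} ≠ ∅` (or both).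
-/

variable {S : Type*} [DecidableEq S]

/-- The number of transitions from `i` to `j` in the finite string `z`. -/
def transCount (z : List S) (i j : S) : ℕ :=
  (z.zip z.tail).countP (fun q => decide (q = (i, j)))

/-- Two finite strings are equivalent if they have the same first element and the
same transition counts between any two states. -/
def StringEquiv (z z' : List S) : Prop :=
  z.head? = z'.head? ∧ ∀ i j : S, transCount z i j = transCount z' i j

/-- Number of adjacent pairs `(a, b)` in `l` with `p a = false` and `p b = true`. -/
def crossN (p : S → Bool) : List S → ℕ
  | a :: b :: t => (if !p a && p b then 1 else 0) + crossN p (b :: t)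
  | _ => 0

lemma crossN_eq (p : S → Bool) (l : List S) :
    crossN p l = (l.zip l.tail).countP (fun q => !p q.1 && p q.2) := by
  match l with
  | [] => rfl
  | [a] => rfl
  | a :: b :: t =>
    have ih := crossN_eq p (b :: t)
    simp only [crossN, List.tail, List.zip_cons_cons, List.countP_cons, ih]
    omega

lemma crossN_zero_of_all_false (p : S → Bool) (l : List S)
    (h : ∀ a ∈ l, p a = false) : crossN p l = 0 := by
  rw [crossN_eq, List.countP_eq_zero]
  intro q hq
  have h2 : q.2 ∈ l := List.mem_of_mem_tail (List.of_mem_zip hq).2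
  simp [h q.2 h2]

lemma crossN_zero_of_split (p : S → Bool) :
    ∀ l₁ l₂ : List S, (∀ a ∈ l₁, p a = true) → (∀ a ∈ l₂, p a = false) →
      crossN p (l₁ ++ l₂) = 0
  | [], l₂, _, h₂ => by simpa using crossN_zero_of_all_false p l₂ h₂
  | a :: t, l₂, h₁, h₂ => by
    have ih := crossN_zero_of_split p t l₂ (fun x hx => h₁ x (List.mem_cons_of_mem _ hx)) h₂
    have hpa : p a = true := h₁ a (List.mem_cons_self)
    rw [List.cons_append]
    cases ht : t ++ l₂ with
    | nil => rfl
    | cons b r => rw [ht] at ih; simp [crossN, hpa, ih]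

lemma crossN_cons_le (p : S → Bool) (a : S) (l : List S) :
    crossN p l ≤ crossN p (a :: l) := by
  match l with
  | [] => simp [crossN]
  | b :: t => simp only [crossN]; omega

lemma crossN_append_le (p : S → Bool) (l₁ l₂ : List S) :
    crossN p l₂ ≤ crossN p (l₁ ++ l₂) := by
  induction l₁ with
  | nil => simp
  | cons a t ih => exact ih.trans (crossN_cons_le p a (t ++ l₂))

lemma false_of_crossN_zero (p : S → Bool) (a : S) (t : List S)
    (h : crossN p (a :: t) = 0) (ha : p a = false) : ∀ b ∈ a :: t, p b = false := by
  induction t generalizing a with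
  | nil => simpa using ha
  | cons b t ih =>
    simp only [crossN] at h
    have hb : p b = false := by
      by_contra hb
      rw [Bool.not_eq_false] at hb
      simp [ha, hb] at h
    have h' : crossN p (b :: t) = 0 := by omega
    intro c hc
    rcases List.mem_cons.1 hc with rfl | hc
    · exact ha
    · exact ih b h' hb c hc

theorem inter_nonempty_of_equiv (j k k' : S)
    (hjk : j ≠ k) (hjk' : j ≠ k') (hkk' : k ≠ k')
    (u v u' v' : List S)
    (h : StringEquiv (u ++ [k, j] ++ v ++ [k', j]) (u' ++ [k', j] ++ v' ++ [k, j])) :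
    (∃ a : S, a ∈ u ++ [k] ∧ a ∈ j :: (v ++ [k'])) ∨
    (∃ a : S, a ∈ u' ++ [k'] ∧ a ∈ j :: (v' ++ [k])) := by
  obtain ⟨-, hT⟩ := h
  left
  by_contra hno
  push_neg at hno
  set x : List S := u ++ [k, j] ++ v ++ [k', j] with hxdef
  set x' : List S := u' ++ [k', j] ++ v' ++ [k, j] with hx'def
  set p : S → Bool := fun a => decide (a ∈ u ++ [k]) with hpdef
  have hmem_false : ∀ a ∈ j :: (v ++ [k']), p a = false := by
    intro a ha
    simp only [hpdef, decide_eq_false_iff_not]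
    intro hm
    exact hno a hm ha
  have hpk : p k = true := by simp [hpdef]
  have hpj : p j = false := hmem_false j (List.mem_cons_self)
  have hpk' : p k' = false := hmem_false k' (by simp)
  -- transition multisets are equal
  have hperm : (x.zip x.tail).Perm (x'.zip x'.tail) := by
    rw [List.perm_iff_count]
    rintro ⟨i, j'⟩
    have h1 : ∀ z : List S, List.count (i, j') (z.zip z.tail)
        = transCount z i j' := fun z => by
      unfold transCount; rw [List.count_eq_countP]; congr 1; funext q; rw [Bool.eq_iff_iff]; simp [beq_iff_eq]
    rw [h1, h1]
    exact hT i j'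
  have hcross_eq : crossN p x = crossN p x' := by
    rw [crossN_eq, crossN_eq]
    exact hperm.countP_eq _
  -- crossN p x = 0
  have hx_split : x = (u ++ [k]) ++ (j :: (v ++ [k', j])) := by simp [hxdef]
  have hcross_x : crossN p x = 0 := by
    rw [hx_split]
    apply crossN_zero_of_split
    · intro a ha; simp only [hpdef, decide_eq_true_eq]; exact ha
    · intro a ha
      apply hmem_false
      rcases List.mem_cons.1 ha with rfl | ha
      · exact List.mem_cons_self
      · rcases List.mem_append.1 ha with hv | hk
        · exact List.mem_cons_of_mem _ (List.mem_append_left _ hv)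
        · rcases List.mem_cons.1 hk with rfl | hj
          · exact List.mem_cons_of_mem _ (List.mem_append_right _ (by simp))
          · simp at hj
            subst hj
            exact List.mem_cons_self
  -- but crossN p x' ≥ 1 : the suffix starting at k' has a false head and contains k
  have hx'_split : x' = u' ++ (k' :: j :: (v' ++ [k, j])) := by simp [hx'def]
  have hs : crossN p (k' :: j :: (v' ++ [k, j])) = 0 := by
    have hle := crossN_append_le p u' (k' :: j :: (v' ++ [k, j]))
    rw [← hx'_split] at hle
    omega
  have hall := false_of_crossN_zero p k' (j :: (v' ++ [k, j])) hs hpk'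
  have : p k = false := hall k (by simp)
  rw [hpk] at this
  exact Bool.noConfusion this
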